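/- Let G be the wallpaper group p2 given by the presentation ⟨T₁, T₂, T₃ | T₁² = T₂² = T₃² = (T₁T₂T₃)² = 1⟩, with generating set S the images of T₁, T₂, T₃ (Cayley graph the hexagonal tiling 6³). Then the spherical growth function satisfies δ(0) = 1 and δ(n) = 3n for all n > 0. -/

import Mathlib

/-- Word length w.r.t. `S ∪ S⁻¹`. -/
noncomputable def wordLength {G : Type*} [Group G] (S : Set G) (g : G) : ℕ :=
  sInf {n | ∃ w : List G, (∀ x ∈ w, x ∈ S ∪ S⁻¹) ∧ w.length = n ∧ w.prod = g}

/-- The spherical growth function `δ(n) = #{g : |g| = n}`. -/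
noncomputable def sphericalGrowth {G : Type*} [Group G] (S : Set G) (n : ℕ) : ℕ :=
  Set.ncard {g : G | wordLength S g = n}

/-- The cumulative growth function `γ(n) = #{g : |g| ≤ n}`. -/
noncomputable def cumulativeGrowth {G : Type*} [Group G] (S : Set G) (n : ℕ) : ℕ :=
  Set.ncard {g : G | wordLength S g ≤ n}

/-- The relators of the wallpaper group `p2 = ⟨T₁,T₂,T₃ | T₁² = T₂² = T₃² = (T₁T₂T₃)² = 1⟩`. -/
def p2Rels : Set (FreeGroup (Fin 3)) :=
  {(FreeGroup.of 0) ^ 2, (FreeGroup.of 1) ^ 2, (FreeGroup.of 2) ^ 2,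
    (FreeGroup.of 0 * FreeGroup.of 1 * FreeGroup.of 2) ^ 2}

@[ext] structure MG where
  x : ℤ
  y : ℤ
  s : ℤˣ

namespace MG

instance : Mul MG := ⟨fun a b => ⟨a.x + a.s * b.x, a.y + a.s * b.y, a.s * b.s⟩⟩
instance : One MG := ⟨⟨0, 0, 1⟩⟩
instance : Inv MG := ⟨fun a => ⟨-(a.s * a.x), -(a.s * a.y), a.s⟩⟩

@[simp] lemma mul_x (a b : MG) : (a * b).x = a.x + a.s * b.x := rfl
@[simp] lemma mul_y (a b : MG) : (a * b).y = a.y + a.s * b.y := rfl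
@[simp] lemma mul_s (a b : MG) : (a * b).s = a.s * b.s := rfl
@[simp] lemma one_x : (1 : MG).x = 0 := rfl
@[simp] lemma one_y : (1 : MG).y = 0 := rfl
@[simp] lemma one_s : (1 : MG).s = 1 := rfl
@[simp] lemma inv_x (a : MG) : (a⁻¹).x = -(a.s * a.x) := rfl
@[simp] lemma inv_y (a : MG) : (a⁻¹).y = -(a.s * a.y) := rfl
@[simp] lemma inv_s (a : MG) : (a⁻¹).s = a.s := rfl

instance : Group MG where
  mul_assoc a b c := by ext <;> simp [Units.val_mul] <;> ring
  one_mul a := by ext <;> simp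
  mul_one a := by ext <;> simp
  inv_mul_cancel a := by
    rcases Int.units_eq_one_or a.s with h | h <;> ext <;> simp [h]

lemma refl_mul_self (a : MG) (h : a.s = -1) : a * a = 1 := by
  ext <;> simp [h]

/-- The three generating point-reflections. -/
def gen : Fin 3 → MG
  | 0 => ⟨0, 0, -1⟩
  | 1 => ⟨1, 0, -1⟩
  | 2 => ⟨0, 1, -1⟩

@[simp] lemma gen_s (i : Fin 3) : (gen i).s = -1 := by fin_cases i <;> rfl

lemma gen_mul_self (i : Fin 3) : gen i * gen i = 1 := refl_mul_self _ (gen_s i)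

@[simp] lemma gen_inv (i : Fin 3) : (gen i)⁻¹ = gen i :=
  inv_eq_of_mul_eq_one_right (gen_mul_self i)

/-- The generating set in the model. -/
def SM : Set MG := Set.range gen

lemma SM_inv : SM⁻¹ = SM := by
  ext g
  constructor
  · rintro ⟨i, hi⟩
    exact ⟨i, by rw [← gen_inv i, hi, inv_inv]⟩
  · rintro ⟨i, rfl⟩
    exact ⟨i, (gen_inv i).symm⟩

lemma SM_union : SM ∪ SM⁻¹ = SM := by rw [SM_inv, Set.union_self]

/-- `A g` : sum of positive parts of the translation coordinates. -/
def A (g : MG) : ℕ := g.x.toNat + g.y.toNat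
/-- `B g` : sum of negative parts of the translation coordinates. -/
def B (g : MG) : ℕ := (-g.x).toNat + (-g.y).toNat

/-- Explicit word-length function on the model (hexagonal norm). -/
def len (g : MG) : ℕ :=
  if g.s = 1 then 2 * max (A g) (B g) else max (2 * A g) (2 * B g + 2) - 1

lemma word_prop (w : List MG) (hw : ∀ x ∈ w, x ∈ SM) :
    (w.prod).s = (-1) ^ w.length ∧ A w.prod ≤ (w.length + 1) / 2 ∧
      B w.prod ≤ w.length / 2 := by
  induction w with
  | nil => simp [A, B]
  | cons a t ih =>
    obtain ⟨hs, hA, hB⟩ := ih (fun x hx => hw x (List.mem_cons_of_mem _ hx))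
    obtain ⟨i, hi⟩ := hw a List.mem_cons_self
    subst hi
    refine ⟨by rw [List.prod_cons, mul_s, hs, List.length_cons, pow_succ, gen_s, mul_comm], ?_, ?_⟩ <;>
      (fin_cases i <;> simp [gen, A, B] at hA hB ⊢ <;> omega)

lemma step (g : MG) (h : len g ≠ 0) : ∃ i, len (gen i * g) + 1 = len g := by
  rcases Int.units_eq_one_or g.s with hs | hs
  · by_cases hx : 1 ≤ g.x
    · exact ⟨1, by simp [len, gen, A, B, hs]; omega⟩
    · by_cases hy : 1 ≤ g.y
      · exact ⟨2, by simp [len, gen, A, B, hs]; omega⟩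
      · exact ⟨0, by simp [len, gen, A, B, hs] at h ⊢; omega⟩
  · by_cases hx : 1 ≤ g.x
    · exact ⟨1, by simp [len, gen, A, B, hs]; omega⟩
    · by_cases hy : 1 ≤ g.y
      · exact ⟨2, by simp [len, gen, A, B, hs]; omega⟩
      · exact ⟨0, by simp [len, gen, A, B, hs] at h ⊢; omega⟩

lemma exists_word (g : MG) :
    ∃ w : List MG, (∀ x ∈ w, x ∈ SM) ∧ w.length = len g ∧ w.prod = g := by
  generalize hn : len g = n
  induction n generalizing g with
  | zero =>
    refine ⟨[], by simp, by simp, ?_⟩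
    rcases Int.units_eq_one_or g.s with hs | hs
    · simp [len, hs, A, B] at hn
      ext <;> simp [hs] <;> omega
    · simp [len, hs, A, B] at hn
      exact absurd hn (by omega)
  | succ n ih =>
    obtain ⟨i, hi⟩ := step g (by omega)
    obtain ⟨w, h1, h2, h3⟩ := ih (gen i * g) (by omega)
    refine ⟨gen i :: w, ?_, by simp [h2], ?_⟩
    · rintro x hx
      rcases List.mem_cons.1 hx with rfl | hx
      · exact ⟨i, rfl⟩
      · exact h1 x hx
    · simp [h3, ← mul_assoc, gen_mul_self]

lemma wordLength_eq_len (g : MG) : wordLength SM g = len g := by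
  obtain ⟨w, h1, h2, h3⟩ := exists_word g
  have hmem : len g ∈ {n | ∃ w : List MG,
      (∀ x ∈ w, x ∈ SM ∪ SM⁻¹) ∧ w.length = n ∧ w.prod = g} :=
    ⟨w, fun x hx => Or.inl (h1 x hx), h2, h3⟩
  refine le_antisymm (Nat.sInf_le hmem) (le_csInf ⟨_, hmem⟩ ?_)
  rintro n ⟨v, hv1, hv2, hv3⟩
  have hv1' : ∀ x ∈ v, x ∈ SM := by
    intro x hx; have := hv1 x hx; rwa [SM_union] at this
  obtain ⟨hs, hA, hB⟩ := word_prop v hv1'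
  rw [hv3] at hs hA hB
  subst hv2
  rcases Nat.even_or_odd v.length with he | ho
  · rw [he.neg_one_pow] at hs
    rw [len, if_pos hs]
    obtain ⟨m, hm⟩ := he
    omega
  · rw [ho.neg_one_pow] at hs
    have : ¬ g.s = 1 := by rw [hs]; decide
    rw [len, if_neg this]
    obtain ⟨m, hm⟩ := ho
    omega

end MG

namespace P2

/-- short name for the generators of the presented group -/
def T (i : Fin 3) : PresentedGroup p2Rels := PresentedGroup.of i

lemma mk_rel {r : FreeGroup (Fin 3)} (hr : r ∈ p2Rels) : (PresentedGroup.mk p2Rels) r = 1 :=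
  (QuotientGroup.eq_one_iff r).mpr (Subgroup.subset_normalClosure hr)

lemma h0 : T 0 * T 0 = 1 := by
  have := mk_rel (show (FreeGroup.of (0 : Fin 3)) ^ 2 ∈ p2Rels by simp [p2Rels])
  rwa [map_pow, pow_two] at this

lemma h1 : T 1 * T 1 = 1 := by
  have := mk_rel (show (FreeGroup.of (1 : Fin 3)) ^ 2 ∈ p2Rels by simp [p2Rels])
  rwa [map_pow, pow_two] at this

lemma h2 : T 2 * T 2 = 1 := by
  have := mk_rel (show (FreeGroup.of (2 : Fin 3)) ^ 2 ∈ p2Rels by simp [p2Rels])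
  rwa [map_pow, pow_two] at this

lemma h012 : (T 0 * T 1 * T 2) * (T 0 * T 1 * T 2) = 1 := by
  have := mk_rel (show (FreeGroup.of (0 : Fin 3) * FreeGroup.of 1 * FreeGroup.of 2) ^ 2 ∈ p2Rels
    by simp [p2Rels])
  rwa [map_pow, pow_two, map_mul, map_mul] at this

lemma inv0 : (T 0)⁻¹ = T 0 := inv_eq_of_mul_eq_one_right h0
lemma inv1 : (T 1)⁻¹ = T 1 := inv_eq_of_mul_eq_one_right h1
lemma inv2 : (T 2)⁻¹ = T 2 := inv_eq_of_mul_eq_one_right h2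

lemma key : T 2 * T 1 * T 0 = T 0 * T 1 * T 2 := by
  have hu : (T 0 * T 1 * T 2)⁻¹ = T 0 * T 1 * T 2 := inv_eq_of_mul_eq_one_right h012
  calc T 2 * T 1 * T 0 = (T 0 * T 1 * T 2)⁻¹ := by
        rw [mul_inv_rev, mul_inv_rev, inv0, inv1, inv2, mul_assoc]
    _ = T 0 * T 1 * T 2 := hu

lemma k2 : T 1 * T 0 * T 2 = T 2 * T 0 * T 1 := by
  have h := congrArg (fun z => T 2 * z * T 2) key
  rw [show T 2 * (T 2 * T 1 * T 0) * T 2 = (T 2 * T 2) * (T 1 * T 0 * T 2) by group,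
      show T 2 * (T 0 * T 1 * T 2) * T 2 = (T 2 * T 0 * T 1) * (T 2 * T 2) by group,
      h2, one_mul, mul_one] at h
  exact h

/-- translations in the presented group -/
def TT (x y : ℤ) : PresentedGroup p2Rels := (T 1 * T 0) ^ x * (T 2 * T 0) ^ y

lemma hab : (T 1 * T 0) * (T 2 * T 0) = (T 2 * T 0) * (T 1 * T 0) := by
  rw [show (T 1 * T 0) * (T 2 * T 0) = (T 1 * T 0 * T 2) * T 0 by group,
      show (T 2 * T 0) * (T 1 * T 0) = (T 2 * T 0 * T 1) * T 0 by group, k2]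

lemma TT_mul (x1 y1 x2 y2 : ℤ) : TT x1 y1 * TT x2 y2 = TT (x1 + x2) (y1 + y2) := by
  have hc : Commute (T 1 * T 0) (T 2 * T 0) := hab
  have hswap : (T 2 * T 0) ^ y1 * (T 1 * T 0) ^ x2 = (T 1 * T 0) ^ x2 * (T 2 * T 0) ^ y1 :=
    ((hc.zpow_zpow x2 y1).eq).symm
  rw [TT, TT, TT, zpow_add, zpow_add]
  calc (T 1 * T 0) ^ x1 * (T 2 * T 0) ^ y1 * ((T 1 * T 0) ^ x2 * (T 2 * T 0) ^ y2)
      = (T 1 * T 0) ^ x1 * ((T 2 * T 0) ^ y1 * (T 1 * T 0) ^ x2) * (T 2 * T 0) ^ y2 := by group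
    _ = (T 1 * T 0) ^ x1 * ((T 1 * T 0) ^ x2 * (T 2 * T 0) ^ y1) * (T 2 * T 0) ^ y2 := by
        rw [hswap]
    _ = (T 1 * T 0) ^ x1 * (T 1 * T 0) ^ x2 * ((T 2 * T 0) ^ y1 * (T 2 * T 0) ^ y2) := by group

lemma sconj_a : T 0 * (T 1 * T 0) = (T 1 * T 0)⁻¹ * T 0 := by
  rw [mul_inv_rev, inv0, inv1]
  rw [show T 0 * (T 1 * T 0) = (T 0 * T 1) * T 0 by group]

lemma sconj_b : T 0 * (T 2 * T 0) = (T 2 * T 0)⁻¹ * T 0 := by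
  rw [mul_inv_rev, inv0, inv2]
  rw [show T 0 * (T 2 * T 0) = (T 0 * T 2) * T 0 by group]

lemma s_push (x y : ℤ) : T 0 * TT x y = TT (-x) (-y) * T 0 := by
  have sa : SemiconjBy (T 0) (T 1 * T 0) ((T 1 * T 0)⁻¹) := sconj_a
  have sb : SemiconjBy (T 0) (T 2 * T 0) ((T 2 * T 0)⁻¹) := sconj_b
  have sa' := (sa.zpow_right x).eq
  have sb' := (sb.zpow_right y).eq
  rw [inv_zpow, ← zpow_neg] at sa' sb'
  rw [TT, TT]
  calc T 0 * ((T 1 * T 0) ^ x * (T 2 * T 0) ^ y)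
      = (T 0 * (T 1 * T 0) ^ x) * (T 2 * T 0) ^ y := by group
    _ = ((T 1 * T 0) ^ (-x) * T 0) * (T 2 * T 0) ^ y := by rw [sa']
    _ = (T 1 * T 0) ^ (-x) * (T 0 * (T 2 * T 0) ^ y) := by group
    _ = (T 1 * T 0) ^ (-x) * ((T 2 * T 0) ^ (-y) * T 0) := by rw [sb']
    _ = (T 1 * T 0) ^ (-x) * (T 2 * T 0) ^ (-y) * T 0 := by group

end P2

namespace P2

lemma lift_rels : ∀ r ∈ p2Rels, FreeGroup.lift MG.gen r = 1 := by
  intro r hr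
  simp only [p2Rels, Set.mem_insert_iff, Set.mem_singleton_iff] at hr
  rcases hr with rfl | rfl | rfl | rfl <;>
    simp only [map_pow, map_mul, FreeGroup.lift_apply_of, pow_two]
  · exact MG.gen_mul_self 0
  · exact MG.gen_mul_self 1
  · exact MG.gen_mul_self 2
  · refine MG.refl_mul_self _ ?_
    rw [MG.mul_s, MG.mul_s, MG.gen_s, MG.gen_s, MG.gen_s]
    decide

def φ : PresentedGroup p2Rels →* MG := PresentedGroup.toGroup lift_rels

@[simp] lemma φ_of (i : Fin 3) : φ (PresentedGroup.of i) = MG.gen i :=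
  PresentedGroup.toGroup.of lift_rels

def Fψ (m : MG) : PresentedGroup p2Rels := TT m.x m.y * (if m.s = 1 then 1 else T 0)

lemma ifneg : (if (-1 : ℤˣ) = 1 then (1 : PresentedGroup p2Rels) else T 0) = T 0 :=
  if_neg (by decide)

lemma Fψ_mul (m n : MG) : Fψ (m * n) = Fψ m * Fψ n := by
  rcases Int.units_eq_one_or m.s with e1 | e1 <;>
    rcases Int.units_eq_one_or n.s with e2 | e2 <;>
      simp only [Fψ, MG.mul_x, MG.mul_y, MG.mul_s, e1, e2, Units.val_one, Units.val_neg,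
        one_mul, mul_one, neg_mul, neg_neg, if_true, ← TT_mul, ifneg, if_pos rfl,
        one_mul, mul_one]
  · rw [mul_assoc]
  · calc TT m.x m.y * TT (-n.x) (-n.y) * T 0
        = TT m.x m.y * ((TT (-n.x) (-n.y) * T 0) * (T 0 * T 0)) := by rw [h0]; group
      _ = TT m.x m.y * ((T 0 * TT n.x n.y) * (T 0 * T 0)) := by rw [← s_push]
      _ = TT m.x m.y * T 0 * TT n.x n.y * (T 0 * T 0) := by group
      _ = TT m.x m.y * T 0 * TT n.x n.y := by rw [h0, mul_one]
  · calc TT m.x m.y * TT (-n.x) (-n.y)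
        = TT m.x m.y * (TT (-n.x) (-n.y) * (T 0 * T 0)) := by rw [h0]; group
      _ = TT m.x m.y * ((TT (-n.x) (-n.y) * T 0) * T 0) := by group
      _ = TT m.x m.y * ((T 0 * TT n.x n.y) * T 0) := by rw [← s_push]
      _ = TT m.x m.y * T 0 * (TT n.x n.y * T 0) := by group
def ψ : MG →* PresentedGroup p2Rels := MonoidHom.mk' Fψ Fψ_mul

lemma ψ_gen (i : Fin 3) : ψ (MG.gen i) = PresentedGroup.of i := by
  fin_cases i
  · show Fψ ⟨0, 0, -1⟩ = _
    rw [Fψ, if_neg (by decide), TT, zpow_zero, zpow_zero, mul_one, one_mul]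
    rfl
  · show Fψ ⟨1, 0, -1⟩ = _
    rw [Fψ, if_neg (by decide), TT, zpow_one, zpow_zero, mul_one, mul_assoc, h0, mul_one]
    rfl
  · show Fψ ⟨0, 1, -1⟩ = _
    rw [Fψ, if_neg (by decide), TT, zpow_one, zpow_zero, one_mul, mul_assoc, h0, mul_one]
    rfl

lemma ψφ (g : PresentedGroup p2Rels) : ψ (φ g) = g := by
  have : ψ.comp φ = MonoidHom.id _ := by
    apply PresentedGroup.ext
    intro i
    simp [MonoidHom.comp_apply, φ_of, ψ_gen]
  calc ψ (φ g) = (ψ.comp φ) g := rfl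
    _ = g := by rw [this]; rfl

lemma trans_pow (c d : ℤ) (n : ℕ) : (⟨c, d, 1⟩ : MG) ^ n = ⟨n * c, n * d, 1⟩ := by
  induction n with
  | zero => ext <;> simp
  | succ n ih =>
    rw [pow_succ, ih]
    ext <;> (push_cast; try simp; try ring)

lemma trans_zpow (c d : ℤ) (n : ℤ) : (⟨c, d, 1⟩ : MG) ^ n = ⟨n * c, n * d, 1⟩ := by
  cases n with
  | ofNat n => rw [Int.ofNat_eq_natCast, zpow_natCast, trans_pow]
  | negSucc n =>
    rw [zpow_negSucc, trans_pow]
    ext <;> (simp [Int.negSucc_eq]; try ring)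

lemma φψ (m : MG) : φ (ψ m) = m := by
  have φT : ∀ i, φ (T i) = MG.gen i := fun i => φ_of i
  have ha : φ (T 1 * T 0) = ⟨1, 0, 1⟩ := by
    rw [map_mul, φT, φT]
    ext <;> simp [MG.gen]
  have hb : φ (T 2 * T 0) = ⟨0, 1, 1⟩ := by
    rw [map_mul, φT, φT]
    ext <;> simp [MG.gen]
  have hTT : ∀ x y : ℤ, φ (TT x y) = ⟨x, y, 1⟩ := by
    intro x y
    rw [TT, map_mul, map_zpow, map_zpow, ha, hb, trans_zpow, trans_zpow]
    ext <;> simp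
  show φ (Fψ m) = m
  rcases Int.units_eq_one_or m.s with e | e
  · rw [Fψ, if_pos e, mul_one, hTT]
    ext <;> simp [e]
  · rw [Fψ, if_neg (by rw [e]; decide), map_mul, hTT]
    rw [show φ (T 0) = MG.gen 0 from φ_of 0]
    ext <;> simp [MG.gen, e]

end P2

/-- The set of lengths of words representing `g`. -/
def WSet {G : Type*} [Group G] (S : Set G) (g : G) : Set ℕ :=
  {n | ∃ w : List G, (∀ x ∈ w, x ∈ S ∪ S⁻¹) ∧ w.length = n ∧ w.prod = g}

lemma wordLength_eq_sInf {G : Type*} [Group G] (S : Set G) (g : G) :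
    wordLength S g = sInf (WSet S g) := rfl

lemma mem_WSet_map {G H : Type*} [Group G] [Group H] (χ : G →* H) {S : Set G} {S' : Set H}
    (hS : ∀ x ∈ S, χ x ∈ S') {g : G} {n : ℕ} (hn : n ∈ WSet S g) : n ∈ WSet S' (χ g) := by
  obtain ⟨w, h1, h2, h3⟩ := hn
  refine ⟨w.map χ, ?_, by simp [h2], by rw [← h3]; exact (map_list_prod χ w).symm⟩
  intro x hx
  obtain ⟨y, hy, rfl⟩ := List.mem_map.1 hx
  rcases h1 y hy with h | h
  · exact Or.inl (hS y h)
  · exact Or.inr (by rw [Set.mem_inv, ← map_inv]; exact hS _ (Set.mem_inv.1 h))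

namespace P2

def SP : Set (PresentedGroup p2Rels) := Set.range (PresentedGroup.of (rels := p2Rels))

lemma φ_maps : ∀ x ∈ SP, φ x ∈ MG.SM := by
  rintro x ⟨i, rfl⟩; exact ⟨i, (φ_of i).symm⟩

lemma ψ_maps : ∀ x ∈ MG.SM, ψ x ∈ SP := by
  rintro x ⟨i, rfl⟩; exact ⟨i, (ψ_gen i).symm⟩

lemma wl_P (g : PresentedGroup p2Rels) : wordLength SP g = MG.len (φ g) := by
  rw [← MG.wordLength_eq_len, wordLength_eq_sInf, wordLength_eq_sInf]
  congr 1
  ext n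
  constructor
  · exact fun hn => mem_WSet_map φ φ_maps hn
  · intro hn
    have := mem_WSet_map ψ ψ_maps hn
    rwa [ψφ] at this

lemma ψ_inj : Function.Injective ψ := fun a b h => by rw [← φψ a, ← φψ b, h]

lemma sphere_eq (n : ℕ) :
    {g : PresentedGroup p2Rels | wordLength SP g = n} = ψ '' {m : MG | MG.len m = n} := by
  ext g
  simp only [Set.mem_setOf_eq, Set.mem_image]
  constructor
  · intro h
    exact ⟨φ g, by rw [← wl_P]; exact h, ψφ g⟩
  · rintro ⟨m, hm, rfl⟩
    rw [wl_P, φψ]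
    exact hm

lemma sphere_ncard (n : ℕ) :
    Set.ncard {g : PresentedGroup p2Rels | wordLength SP g = n}
      = Set.ncard {m : MG | MG.len m = n} := by
  rw [sphere_eq, Set.ncard_image_of_injective _ ψ_inj]

end P2

namespace CNT

lemma mem_seg {α : Type*} [DecidableEq α] (f : ℤ → α) (lo hi : ℤ) (v : α) :
    v ∈ (Finset.Icc lo hi).image f ↔ ∃ a, lo ≤ a ∧ a ≤ hi ∧ f a = v := by
  simp [Finset.mem_image, and_assoc]

/-- hexagonal ring of radius k (even sphere, elements of length 2k). -/
noncomputable def ringE (k : ℕ) : Finset (ℤ × ℤ) :=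
  ((Finset.Icc (0:ℤ) k).image fun a => (a, (k:ℤ) - a)) ∪
  ((Finset.Icc (1:ℤ) k).image fun b => ((k:ℤ), -b)) ∪
  ((Finset.Icc (1:ℤ) k).image fun b => (-b, (k:ℤ))) ∪
  ((Finset.Icc (0:ℤ) k).image fun a => (-a, a - (k:ℤ))) ∪
  ((Finset.Icc (1:ℤ) ((k:ℤ)-1)).image fun a => (a, -(k:ℤ))) ∪
  ((Finset.Icc (1:ℤ) ((k:ℤ)-1)).image fun a => (-(k:ℤ), a))

/-- off-center hexagonal ring (odd sphere, elements of length 2k+1). -/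
noncomputable def ringO (k : ℕ) : Finset (ℤ × ℤ) :=
  ((Finset.Icc (0:ℤ) ((k:ℤ)+1)).image fun a => (a, (k:ℤ) + 1 - a)) ∪
  ((Finset.Icc (1:ℤ) k).image fun b => ((k:ℤ) + 1, -b)) ∪
  ((Finset.Icc (1:ℤ) k).image fun b => (-b, (k:ℤ) + 1)) ∪
  ((Finset.Icc (0:ℤ) k).image fun a => (-a, a - (k:ℤ))) ∪
  ((Finset.Icc (1:ℤ) k).image fun a => (a, -(k:ℤ))) ∪
  ((Finset.Icc (1:ℤ) k).image fun a => (-(k:ℤ), a))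

lemma mem_ringE (k : ℕ) (hk : 1 ≤ k) (x y : ℤ) :
    (x, y) ∈ ringE k ↔ max (x.toNat + y.toNat) ((-x).toNat + (-y).toNat) = k := by
  simp only [ringE, Finset.mem_union, mem_seg, Prod.mk.injEq]
  constructor
  · rintro (((((⟨a, h1, h2, h3, h4⟩ | ⟨a, h1, h2, h3, h4⟩) | ⟨a, h1, h2, h3, h4⟩) |
      ⟨a, h1, h2, h3, h4⟩) | ⟨a, h1, h2, h3, h4⟩) | ⟨a, h1, h2, h3, h4⟩) <;> omega
  · intro h
    by_cases c1 : 0 ≤ x ∧ 0 ≤ y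
    · refine Or.inl (Or.inl (Or.inl (Or.inl (Or.inl ⟨x, ?_, ?_, ?_, ?_⟩)))) <;> omega
    by_cases c2 : x ≤ 0 ∧ y ≤ 0
    · refine Or.inl (Or.inl (Or.inr ⟨-x, ?_, ?_, ?_, ?_⟩)) <;> omega
    by_cases c3 : 0 < x ∧ y < 0
    · by_cases c4 : x = k
      · refine Or.inl (Or.inl (Or.inl (Or.inl (Or.inr ⟨-y, ?_, ?_, ?_, ?_⟩)))) <;> omega
      · refine Or.inl (Or.inr ⟨x, ?_, ?_, ?_, ?_⟩) <;> omega
    · by_cases c4 : y = k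
      · refine Or.inl (Or.inl (Or.inl (Or.inr ⟨-x, ?_, ?_, ?_, ?_⟩))) <;> omega
      · refine Or.inr ⟨y, ?_, ?_, ?_, ?_⟩ <;> omega

lemma mem_ringO (k : ℕ) (x y : ℤ) :
    (x, y) ∈ ringO k ↔
      max (2 * (x.toNat + y.toNat)) (2 * ((-x).toNat + (-y).toNat) + 2) - 1 = 2 * k + 1 := by
  simp only [ringO, Finset.mem_union, mem_seg, Prod.mk.injEq]
  constructor
  · rintro (((((⟨a, h1, h2, h3, h4⟩ | ⟨a, h1, h2, h3, h4⟩) | ⟨a, h1, h2, h3, h4⟩) |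
      ⟨a, h1, h2, h3, h4⟩) | ⟨a, h1, h2, h3, h4⟩) | ⟨a, h1, h2, h3, h4⟩) <;> omega
  · intro h
    by_cases c2 : x ≤ 0 ∧ y ≤ 0
    · refine Or.inl (Or.inl (Or.inr ⟨-x, ?_, ?_, ?_, ?_⟩)) <;> omega
    by_cases c1 : 0 ≤ x ∧ 0 ≤ y
    · refine Or.inl (Or.inl (Or.inl (Or.inl (Or.inl ⟨x, ?_, ?_, ?_, ?_⟩)))) <;> omega
    by_cases c3 : 0 < x ∧ y < 0
    · by_cases c4 : x = (k:ℤ) + 1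
      · refine Or.inl (Or.inl (Or.inl (Or.inl (Or.inr ⟨-y, ?_, ?_, ?_, ?_⟩)))) <;> omega
      · refine Or.inl (Or.inr ⟨x, ?_, ?_, ?_, ?_⟩) <;> omega
    · by_cases c4 : y = (k:ℤ) + 1
      · refine Or.inl (Or.inl (Or.inl (Or.inr ⟨-x, ?_, ?_, ?_, ?_⟩))) <;> omega
      · refine Or.inr ⟨y, ?_, ?_, ?_, ?_⟩ <;> omega

lemma seg_card (f : ℤ → ℤ × ℤ) (hf : Function.Injective f) (lo hi : ℤ) :
    ((Finset.Icc lo hi).image f).card = (hi + 1 - lo).toNat := by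
  rw [Finset.card_image_of_injective _ hf, Int.card_Icc]

lemma inj1 (c : ℤ) : Function.Injective (fun a : ℤ => (a, c - a)) :=
  fun a b h => by simpa using congrArg Prod.fst h
lemma inj2 (c : ℤ) : Function.Injective (fun b : ℤ => (c, -b)) :=
  fun a b h => by simpa using congrArg Prod.snd h
lemma inj3 (c : ℤ) : Function.Injective (fun b : ℤ => (-b, c)) :=
  fun a b h => by simpa using congrArg Prod.fst h
lemma inj4 (c : ℤ) : Function.Injective (fun a : ℤ => (-a, a - c)) :=
  fun a b h => by simpa using congrArg Prod.fst h
lemma inj5 (c : ℤ) : Function.Injective (fun a : ℤ => (a, -c)) :=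
  fun a b h => by simpa using congrArg Prod.fst h
lemma inj6 (c : ℤ) : Function.Injective (fun a : ℤ => (-c, a)) :=
  fun a b h => by simpa using congrArg Prod.snd h

lemma card_ringE (k : ℕ) (hk : 1 ≤ k) : (ringE k).card = 6 * k := by
  have d2 : Disjoint ((Finset.Icc (0:ℤ) k).image fun a => (a, (k:ℤ) - a))
      ((Finset.Icc (1:ℤ) k).image fun b => ((k:ℤ), -b)) := by
    rw [Finset.disjoint_left]
    rintro ⟨x, y⟩ hv hw
    simp only [Finset.mem_union, mem_seg, Prod.mk.injEq] at hv hw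
    obtain ⟨b, g1, g2, g3, g4⟩ := hw
    rcases hv with ⟨a, h1, h2, h3, h4⟩ <;> omega
  have d3 : Disjoint (((Finset.Icc (0:ℤ) k).image fun a => (a, (k:ℤ) - a)) ∪
      ((Finset.Icc (1:ℤ) k).image fun b => ((k:ℤ), -b)))
      ((Finset.Icc (1:ℤ) k).image fun b => (-b, (k:ℤ))) := by
    rw [Finset.disjoint_left]
    rintro ⟨x, y⟩ hv hw
    simp only [Finset.mem_union, mem_seg, Prod.mk.injEq] at hv hw
    obtain ⟨b, g1, g2, g3, g4⟩ := hw
    rcases hv with (⟨a, h1, h2, h3, h4⟩ | ⟨a, h1, h2, h3, h4⟩) <;> omega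
  have d4 : Disjoint ((((Finset.Icc (0:ℤ) k).image fun a => (a, (k:ℤ) - a)) ∪
      ((Finset.Icc (1:ℤ) k).image fun b => ((k:ℤ), -b))) ∪
      ((Finset.Icc (1:ℤ) k).image fun b => (-b, (k:ℤ))))
      ((Finset.Icc (0:ℤ) k).image fun a => (-a, a - (k:ℤ))) := by
    rw [Finset.disjoint_left]
    rintro ⟨x, y⟩ hv hw
    simp only [Finset.mem_union, mem_seg, Prod.mk.injEq] at hv hw
    obtain ⟨b, g1, g2, g3, g4⟩ := hw
    rcases hv with ((⟨a, h1, h2, h3, h4⟩ | ⟨a, h1, h2, h3, h4⟩) | ⟨a, h1, h2, h3, h4⟩) <;> omega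
  have d5 : Disjoint (((((Finset.Icc (0:ℤ) k).image fun a => (a, (k:ℤ) - a)) ∪
      ((Finset.Icc (1:ℤ) k).image fun b => ((k:ℤ), -b))) ∪
      ((Finset.Icc (1:ℤ) k).image fun b => (-b, (k:ℤ)))) ∪
      ((Finset.Icc (0:ℤ) k).image fun a => (-a, a - (k:ℤ))))
      ((Finset.Icc (1:ℤ) ((k:ℤ)-1)).image fun a => (a, -(k:ℤ))) := by
    rw [Finset.disjoint_left]
    rintro ⟨x, y⟩ hv hw
    simp only [Finset.mem_union, mem_seg, Prod.mk.injEq] at hv hw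
    obtain ⟨b, g1, g2, g3, g4⟩ := hw
    rcases hv with (((⟨a, h1, h2, h3, h4⟩ | ⟨a, h1, h2, h3, h4⟩) | ⟨a, h1, h2, h3, h4⟩) | ⟨a, h1, h2, h3, h4⟩) <;> omega
  have d6 : Disjoint ((((((Finset.Icc (0:ℤ) k).image fun a => (a, (k:ℤ) - a)) ∪
      ((Finset.Icc (1:ℤ) k).image fun b => ((k:ℤ), -b))) ∪
      ((Finset.Icc (1:ℤ) k).image fun b => (-b, (k:ℤ)))) ∪
      ((Finset.Icc (0:ℤ) k).image fun a => (-a, a - (k:ℤ)))) ∪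
      ((Finset.Icc (1:ℤ) ((k:ℤ)-1)).image fun a => (a, -(k:ℤ))))
      ((Finset.Icc (1:ℤ) ((k:ℤ)-1)).image fun a => (-(k:ℤ), a)) := by
    rw [Finset.disjoint_left]
    rintro ⟨x, y⟩ hv hw
    simp only [Finset.mem_union, mem_seg, Prod.mk.injEq] at hv hw
    obtain ⟨b, g1, g2, g3, g4⟩ := hw
    rcases hv with ((((⟨a, h1, h2, h3, h4⟩ | ⟨a, h1, h2, h3, h4⟩) | ⟨a, h1, h2, h3, h4⟩) | ⟨a, h1, h2, h3, h4⟩) | ⟨a, h1, h2, h3, h4⟩) <;> omega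
  rw [ringE, Finset.card_union_of_disjoint d6, Finset.card_union_of_disjoint d5,
    Finset.card_union_of_disjoint d4, Finset.card_union_of_disjoint d3,
    Finset.card_union_of_disjoint d2,
    seg_card _ (inj1 _), seg_card _ (inj2 _), seg_card _ (inj3 _),
    seg_card _ (inj4 _), seg_card _ (inj5 _), seg_card _ (inj6 _)]
  omega

lemma card_ringO (k : ℕ) : (ringO k).card = 6 * k + 3 := by
  have d2 : Disjoint ((Finset.Icc (0:ℤ) ((k:ℤ)+1)).image fun a => (a, (k:ℤ) + 1 - a))
      ((Finset.Icc (1:ℤ) k).image fun b => ((k:ℤ) + 1, -b)) := by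
    rw [Finset.disjoint_left]
    rintro ⟨x, y⟩ hv hw
    simp only [Finset.mem_union, mem_seg, Prod.mk.injEq] at hv hw
    obtain ⟨b, g1, g2, g3, g4⟩ := hw
    rcases hv with ⟨a, h1, h2, h3, h4⟩ <;> omega
  have d3 : Disjoint (((Finset.Icc (0:ℤ) ((k:ℤ)+1)).image fun a => (a, (k:ℤ) + 1 - a)) ∪
      ((Finset.Icc (1:ℤ) k).image fun b => ((k:ℤ) + 1, -b)))
      ((Finset.Icc (1:ℤ) k).image fun b => (-b, (k:ℤ) + 1)) := by
    rw [Finset.disjoint_left]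
    rintro ⟨x, y⟩ hv hw
    simp only [Finset.mem_union, mem_seg, Prod.mk.injEq] at hv hw
    obtain ⟨b, g1, g2, g3, g4⟩ := hw
    rcases hv with (⟨a, h1, h2, h3, h4⟩ | ⟨a, h1, h2, h3, h4⟩) <;> omega
  have d4 : Disjoint ((((Finset.Icc (0:ℤ) ((k:ℤ)+1)).image fun a => (a, (k:ℤ) + 1 - a)) ∪
      ((Finset.Icc (1:ℤ) k).image fun b => ((k:ℤ) + 1, -b))) ∪
      ((Finset.Icc (1:ℤ) k).image fun b => (-b, (k:ℤ) + 1)))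
      ((Finset.Icc (0:ℤ) k).image fun a => (-a, a - (k:ℤ))) := by
    rw [Finset.disjoint_left]
    rintro ⟨x, y⟩ hv hw
    simp only [Finset.mem_union, mem_seg, Prod.mk.injEq] at hv hw
    obtain ⟨b, g1, g2, g3, g4⟩ := hw
    rcases hv with ((⟨a, h1, h2, h3, h4⟩ | ⟨a, h1, h2, h3, h4⟩) | ⟨a, h1, h2, h3, h4⟩) <;> omega
  have d5 : Disjoint (((((Finset.Icc (0:ℤ) ((k:ℤ)+1)).image fun a => (a, (k:ℤ) + 1 - a)) ∪
      ((Finset.Icc (1:ℤ) k).image fun b => ((k:ℤ) + 1, -b))) ∪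
      ((Finset.Icc (1:ℤ) k).image fun b => (-b, (k:ℤ) + 1))) ∪
      ((Finset.Icc (0:ℤ) k).image fun a => (-a, a - (k:ℤ))))
      ((Finset.Icc (1:ℤ) k).image fun a => (a, -(k:ℤ))) := by
    rw [Finset.disjoint_left]
    rintro ⟨x, y⟩ hv hw
    simp only [Finset.mem_union, mem_seg, Prod.mk.injEq] at hv hw
    obtain ⟨b, g1, g2, g3, g4⟩ := hw
    rcases hv with (((⟨a, h1, h2, h3, h4⟩ | ⟨a, h1, h2, h3, h4⟩) | ⟨a, h1, h2, h3, h4⟩) | ⟨a, h1, h2, h3, h4⟩) <;> omega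
  have d6 : Disjoint ((((((Finset.Icc (0:ℤ) ((k:ℤ)+1)).image fun a => (a, (k:ℤ) + 1 - a)) ∪
      ((Finset.Icc (1:ℤ) k).image fun b => ((k:ℤ) + 1, -b))) ∪
      ((Finset.Icc (1:ℤ) k).image fun b => (-b, (k:ℤ) + 1))) ∪
      ((Finset.Icc (0:ℤ) k).image fun a => (-a, a - (k:ℤ)))) ∪
      ((Finset.Icc (1:ℤ) k).image fun a => (a, -(k:ℤ))))
      ((Finset.Icc (1:ℤ) k).image fun a => (-(k:ℤ), a)) := by
    rw [Finset.disjoint_left]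
    rintro ⟨x, y⟩ hv hw
    simp only [Finset.mem_union, mem_seg, Prod.mk.injEq] at hv hw
    obtain ⟨b, g1, g2, g3, g4⟩ := hw
    rcases hv with ((((⟨a, h1, h2, h3, h4⟩ | ⟨a, h1, h2, h3, h4⟩) | ⟨a, h1, h2, h3, h4⟩) | ⟨a, h1, h2, h3, h4⟩) | ⟨a, h1, h2, h3, h4⟩) <;> omega
  rw [ringO, Finset.card_union_of_disjoint d6, Finset.card_union_of_disjoint d5,
    Finset.card_union_of_disjoint d4, Finset.card_union_of_disjoint d3,
    Finset.card_union_of_disjoint d2,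
    seg_card _ (inj1 _), seg_card _ (inj2 _), seg_card _ (inj3 _),
    seg_card _ (inj4 _), seg_card _ (inj5 _), seg_card _ (inj6 _)]
  omega

end CNT


section Glue
open MG

lemma len_mk1 (x y : ℤ) :
    MG.len ⟨x, y, 1⟩ = 2 * max (x.toNat + y.toNat) ((-x).toNat + (-y).toNat) := by
  simp [MG.len, MG.A, MG.B]

lemma len_mkm1 (x y : ℤ) :
    MG.len ⟨x, y, -1⟩
      = max (2 * (x.toNat + y.toNat)) (2 * ((-x).toNat + (-y).toNat) + 2) - 1 := by
  simp only [MG.len, MG.A, MG.B]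
  rw [if_neg (show ¬(MG.mk x y (-1)).s = 1 from fun h => (by decide : ¬(-1 : ℤˣ) = 1) h)]

lemma embed_inj (s : ℤˣ) : Function.Injective (fun v : ℤ × ℤ => (⟨v.1, v.2, s⟩ : MG)) := by
  intro a b h
  simp only [MG.mk.injEq] at h
  exact Prod.ext h.1 h.2.1

lemma sphere_even (k : ℕ) (hk : 1 ≤ k) :
    {m : MG | MG.len m = 2 * k} = (fun v : ℤ × ℤ => (⟨v.1, v.2, 1⟩ : MG)) '' ↑(CNT.ringE k) := by
  ext m
  simp only [Set.mem_setOf_eq, Set.mem_image, Finset.mem_coe]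
  constructor
  · intro h
    rcases Int.units_eq_one_or m.s with e | e
    · refine ⟨(m.x, m.y), ?_, by ext <;> simp [e]⟩
      rw [CNT.mem_ringE k hk]
      rw [MG.len, if_pos e, MG.A, MG.B] at h
      omega
    · rw [MG.len, if_neg (by rw [e]; decide), MG.A, MG.B] at h
      omega
  · rintro ⟨v, hv, rfl⟩
    rw [CNT.mem_ringE k hk] at hv
    rw [len_mk1]
    omega

lemma sphere_odd (k : ℕ) :
    {m : MG | MG.len m = 2 * k + 1}
      = (fun v : ℤ × ℤ => (⟨v.1, v.2, -1⟩ : MG)) '' ↑(CNT.ringO k) := by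
  ext m
  simp only [Set.mem_setOf_eq, Set.mem_image, Finset.mem_coe]
  constructor
  · intro h
    rcases Int.units_eq_one_or m.s with e | e
    · rw [MG.len, if_pos e, MG.A, MG.B] at h
      omega
    · refine ⟨(m.x, m.y), ?_, by ext <;> simp [e]⟩
      rw [CNT.mem_ringO k]
      rw [MG.len, if_neg (by rw [e]; decide), MG.A, MG.B] at h
      omega
  · rintro ⟨v, hv, rfl⟩
    rw [CNT.mem_ringO k] at hv
    rw [len_mkm1]
    omega

lemma sphere_zero : {m : MG | MG.len m = 0} = {1} := by
  ext m
  simp only [Set.mem_setOf_eq, Set.mem_singleton_iff]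
  constructor
  · intro h
    rcases Int.units_eq_one_or m.s with e | e
    · rw [MG.len, if_pos e, MG.A, MG.B] at h
      ext <;> simp [e] <;> omega
    · rw [MG.len, if_neg (by rw [e]; decide), MG.A, MG.B] at h
      omega
  · rintro rfl
    simp [MG.len, MG.A, MG.B]

end Glue

/-- Spherical growth of `p2` with generators `T₁,T₂,T₃` (Cayley graph: the hexagonal tiling
`6³`): `δ(0) = 1`, `δ(n) = 3n` for `n > 0`. -/
theorem sphericalGrowth_p2_hexagonal :
    sphericalGrowth (Set.range (PresentedGroup.of (rels := p2Rels))) 0 = 1 ∧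
      ∀ n : ℕ, 0 < n →
        sphericalGrowth (Set.range (PresentedGroup.of (rels := p2Rels))) n = 3 * n := by
  constructor
  · show Set.ncard {g | wordLength P2.SP g = 0} = 1
    rw [P2.sphere_ncard, sphere_zero, Set.ncard_singleton]
  · intro n hn
    show Set.ncard {g | wordLength P2.SP g = n} = 3 * n
    rw [P2.sphere_ncard]
    rcases Nat.even_or_odd n with ⟨k, hk⟩ | ⟨k, hk⟩
    · have hk1 : 1 ≤ k := by omega
      rw [show n = 2 * k by omega, sphere_even k hk1,
        Set.ncard_image_of_injective _ (embed_inj 1), Set.ncard_coe_finset,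
        CNT.card_ringE k hk1]
      omega
    · rw [show n = 2 * k + 1 by omega, sphere_odd k,
        Set.ncard_image_of_injective _ (embed_inj (-1)), Set.ncard_coe_finset,
        CNT.card_ringO k]
      omega
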